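/- Let f : K → ℝ satisfy f k ≥ 0 for all k ∈ K. Then Σ_{(k, j) : od k = od j} (c_k(f) − c_j(f))² · f k · f j = 0 if and only if f is an equilibrium (J_k(f) = 0 for all k ∈ K). -/
import Mathlib


open Finset

/-- Link flow on arc `a` induced by route flows `f`. -/
noncomputable def linkFlow {A K : Type*} [Fintype K] (δ : A → K → ℝ)
    (f : K → ℝ) (a : A) : ℝ :=
  ∑ k, δ a k * f k

/-- Travel time on route `k` induced by route flows `f`. -/
noncomputable def routeTime {A K : Type*} [Fintype A] [Fintype K] (δ : A → K → ℝ)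
    (t : A → ℝ → ℝ) (f : K → ℝ) (k : K) : ℝ :=
  ∑ a, t a (linkFlow δ f a) * δ a k

/-- O-D FIFO violation of route `k` at route-flow state `f`. -/
noncomputable def fifoViolation {A W K : Type*} [Fintype A] [Fintype K] [DecidableEq W]
    (od : K → W) (δ : A → K → ℝ) (t : A → ℝ → ℝ) (f : K → ℝ) (k : K) : ℝ :=
  f k * ∑ j ∈ univ.filter (fun j => od j = od k),
    (routeTime δ t f k - routeTime δ t f j) * f j

theorem dissipation_zero_iff_equilibrium {A W K : Type*} [Fintype A] [Fintype W] [Fintype K] [DecidableEq W]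
    (od : K → W) (δ : A → K → ℝ) (hδ : ∀ a k, δ a k = 0 ∨ δ a k = 1)
    (t : A → ℝ → ℝ)
    (f : K → ℝ) (hf : ∀ k, 0 ≤ f k) :
    (∑ k, ∑ j ∈ univ.filter (fun j => od j = od k),
        (routeTime δ t f k - routeTime δ t f j)^2 * f k * f j = 0) ↔
      (∀ k, fifoViolation od δ t f k = 0) := by
  set c := routeTime δ t f with hc
  constructor
  · intro hS k
    -- each term is nonneg, so each term is zero
    have hterm : ∀ k ∈ (univ : Finset K), ∀ j ∈ univ.filter (fun j => od j = od k),
        (c k - c j)^2 * f k * f j = 0 := by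
      have h1 : ∀ k ∈ (univ : Finset K),
          (0:ℝ) ≤ ∑ j ∈ univ.filter (fun j => od j = od k),
            (c k - c j)^2 * f k * f j := by
        intro k _
        refine sum_nonneg fun j _ => ?_
        have h1 := hf k; have h2 := hf j; positivity
      have h2 := (sum_eq_zero_iff_of_nonneg h1).mp hS
      intro k hk j hj
      have h3 : ∀ j ∈ univ.filter (fun j => od j = od k),
          (0:ℝ) ≤ (c k - c j)^2 * f k * f j := fun j _ => by
        have h1 := hf k; have h2 := hf j; positivity
      exact (sum_eq_zero_iff_of_nonneg h3).mp (h2 k hk) j hj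
    unfold fifoViolation
    rw [mul_sum]
    apply sum_eq_zero
    intro j hj
    have h := hterm k (mem_univ k) j hj
    rcases mul_eq_zero.mp h with h' | h'
    · rcases mul_eq_zero.mp h' with h'' | h''
      · have : c k - c j = 0 := by
          have := sq_eq_zero_iff.mp h''
          exact this
        rw [← hc, this, zero_mul, mul_zero]
      · rw [← hc, h'', zero_mul]
    · rw [← hc, h', mul_zero, mul_zero]
  · intro hJ
    -- S = 2 * Σ_k c k * J_k = 0
    have swap : ∑ k, ∑ j ∈ univ.filter (fun j => od j = od k),
          c j * ((c k - c j) * (f k * f j))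
        = ∑ k, ∑ j ∈ univ.filter (fun j => od j = od k),
          c k * ((c j - c k) * (f j * f k)) := by
      refine sum_comm' fun x y => ?_
      simp [eq_comm]
    have key : ∀ k, ∑ j ∈ univ.filter (fun j => od j = od k),
        c k * ((c k - c j) * (f k * f j)) = c k * fifoViolation od δ t f k := by
      intro k
      unfold fifoViolation
      rw [← hc]
      simp only [Finset.mul_sum]
      apply sum_congr rfl
      intro j _
      ring
    calc ∑ k, ∑ j ∈ univ.filter (fun j => od j = od k),
            (c k - c j)^2 * f k * f j
        = ∑ k, ∑ j ∈ univ.filter (fun j => od j = od k),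
            (c k * ((c k - c j) * (f k * f j)) - c j * ((c k - c j) * (f k * f j))) := by
          apply sum_congr rfl; intro k _; apply sum_congr rfl; intro j _; ring
      _ = (∑ k, ∑ j ∈ univ.filter (fun j => od j = od k),
            c k * ((c k - c j) * (f k * f j)))
          - ∑ k, ∑ j ∈ univ.filter (fun j => od j = od k),
            c j * ((c k - c j) * (f k * f j)) := by
          rw [← sum_sub_distrib]
          apply sum_congr rfl; intro k _; rw [sum_sub_distrib]
      _ = (∑ k, c k * fifoViolation od δ t f k)
          - ∑ k, ∑ j ∈ univ.filter (fun j => od j = od k),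
            c k * ((c j - c k) * (f j * f k)) := by
          rw [swap]; congr 1; exact sum_congr rfl fun k _ => key k
      _ = 0 := by
          have : ∀ k, ∑ j ∈ univ.filter (fun j => od j = od k),
              c k * ((c j - c k) * (f j * f k)) = - (c k * fifoViolation od δ t f k) := by
            intro k
            rw [← key k, ← sum_neg_distrib]
            apply sum_congr rfl; intro j _; ring
          simp only [this, hJ, mul_zero, neg_zero, sum_const_zero, sub_zero]
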